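/- Let p be a prime and n an integer with p ∤ n. Then (1/|SL₂(ℤ/pℤ)|) · Σ_{w ∈ SL₂(ℤ/pℤ)} c_p(d(w) − n) = 1/(p² − 1), where d(w) denotes the bottom-right entry of w (lifted to ℤ). -/

import Mathlib

/-- The Ramanujan sum `c_q(m) = Σ_{a ∈ (ℤ/qℤ)ˣ} e^{2πi a m / q}`. -/
noncomputable def ramanujanSum (q : ℕ) [NeZero q] (m : ℤ) : ℂ :=
  ∑ a : (ZMod q)ˣ,
    Complex.exp (2 * Real.pi * Complex.I * (((a : ZMod q).val : ℂ) * (m : ℂ)) / (q : ℂ))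

/-- The bottom-right entry of `w ∈ SL₂(ℤ/qℤ)`, lifted to `ℤ`. -/
def dEntry {q : ℕ} (w : Matrix.SpecialLinearGroup (Fin 2) (ZMod q)) : ℤ :=
  ((w : Matrix (Fin 2) (Fin 2) (ZMod q)) 1 1).val

open Finset Complex Matrix

variable (p : ℕ) [hp : Fact p.Prime]

noncomputable def eps (x : ZMod p) : ℂ :=
  Complex.exp (2 * Real.pi * Complex.I / p) ^ x.val

lemma exp_eq_eps (k : ℤ) :
    Complex.exp (2 * Real.pi * Complex.I * (k : ℂ) / p) = eps p ((k : ZMod p)) := by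
  have hp0 : (p : ℂ) ≠ 0 := Nat.cast_ne_zero.mpr hp.out.pos.ne'
  set ζ := Complex.exp (2 * Real.pi * Complex.I / p) with hζ
  have h1 : Complex.exp (2 * Real.pi * Complex.I * (k : ℂ) / p) = ζ ^ k := by
    rw [hζ, ← Complex.exp_int_mul]
    ring_nf
  have hzp : ζ ^ (p : ℤ) = 1 := by
    rw [hζ, ← Complex.exp_int_mul]
    rw [show ((p : ℤ) : ℂ) * (2 * Real.pi * Complex.I / p) = 2 * Real.pi * Complex.I by
      field_simp
      exact Int.cast_natCast p]
    exact Complex.exp_two_pi_mul_I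
  have hk : k = (p : ℤ) * (k / p) + ((k : ZMod p).val : ℤ) := by
    rw [ZMod.val_intCast]
    exact (Int.mul_ediv_add_emod k p).symm ▸ rfl
  rw [h1]
  conv_lhs => rw [hk]
  rw [zpow_add₀ (Complex.exp_ne_zero _), _root_.zpow_mul, hzp, _root_.one_zpow, one_mul, zpow_natCast]
  rfl

lemma eps_sum : ∑ a : ZMod p, eps p a = 0 := by
  have hζ : IsPrimitiveRoot (Complex.exp (2 * Real.pi * Complex.I / p)) p :=
    Complex.isPrimitiveRoot_exp p hp.out.pos.ne'
  rw [← hζ.geom_sum_eq_zero hp.out.one_lt]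
  refine Finset.sum_nbij' (fun a => a.val) (fun i => (i : ZMod p)) ?_ ?_ ?_ ?_ ?_
  · intro a _; exact Finset.mem_range.mpr (ZMod.val_lt a)
  · intro i _; exact Finset.mem_univ _
  · intro a _; exact ZMod.natCast_rightInverse a
  · intro i hi; exact ZMod.val_cast_of_lt (Finset.mem_range.mp hi)
  · intro a _; rfl

lemma eps_mul_sum (x : ZMod p) (hx : x ≠ 0) : ∑ a : ZMod p, eps p (a * x) = 0 := by
  rw [← eps_sum p]
  exact Fintype.sum_equiv (Equiv.mulRight₀ x hx) _ _ (fun a => rfl)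

variable (p : ℕ) [hp : Fact p.Prime]

abbrev SL2 := Matrix.SpecialLinearGroup (Fin 2) (ZMod p)

def fiberEquivNZ (d : ZMod p) (hd : d ≠ 0) :
    {w : SL2 p // (w : Matrix (Fin 2) (Fin 2) (ZMod p)) 1 1 = d} ≃ ZMod p × ZMod p where
  toFun w := ((w.1 : Matrix (Fin 2) (Fin 2) (ZMod p)) 0 1,
              (w.1 : Matrix (Fin 2) (Fin 2) (ZMod p)) 1 0)
  invFun bc := ⟨⟨!![(1 + bc.1 * bc.2) * d⁻¹, bc.1; bc.2, d], by
      rw [Matrix.det_fin_two_of]; field_simp; ring⟩, by simp⟩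
  left_inv := by
    rintro ⟨⟨M, hM⟩, hw⟩
    have hdet : M 0 0 * M 1 1 - M 0 1 * M 1 0 = 1 := by
      rw [← Matrix.det_fin_two]; exact hM
    simp only at hw
    apply Subtype.ext
    apply Subtype.ext
    simp only
    ext i j
    fin_cases i <;> fin_cases j <;>
      simp only [Matrix.cons_val', Matrix.cons_val_zero, Matrix.cons_val_one, Matrix.head_cons,
        Matrix.empty_val', Matrix.cons_val_fin_one, Matrix.head_fin_const, Matrix.of_apply]
    · rw [hw] at hdet
      show (1 + M 0 1 * M 1 0) * d⁻¹ = M 0 0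
      field_simp
      linear_combination -hdet
    · rfl
    · rfl
    · exact hw.symm
  right_inv := by rintro ⟨b, c⟩; simp

def fiberEquivZ :
    {w : SL2 p // (w : Matrix (Fin 2) (Fin 2) (ZMod p)) 1 1 = 0} ≃ ZMod p × {b : ZMod p // b ≠ 0} where
  toFun w := ((w.1 : Matrix (Fin 2) (Fin 2) (ZMod p)) 0 0,
    ⟨(w.1 : Matrix (Fin 2) (Fin 2) (ZMod p)) 0 1, by
      rcases w with ⟨⟨M, hM⟩, hw⟩
      have hdet : M 0 0 * M 1 1 - M 0 1 * M 1 0 = 1 := by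
        rw [← Matrix.det_fin_two]; exact hM
      simp only at hw ⊢
      intro hb
      rw [hw, hb] at hdet
      simp at hdet⟩)
  invFun ab := ⟨⟨!![ab.1, ab.2.1; -(ab.2.1)⁻¹, 0], by
      rw [Matrix.det_fin_two_of]; field_simp; simp [div_self ab.2.2]⟩, by simp⟩
  left_inv := by
    rintro ⟨⟨M, hM⟩, hw⟩
    have hdet : M 0 0 * M 1 1 - M 0 1 * M 1 0 = 1 := by
      rw [← Matrix.det_fin_two]; exact hM
    simp only at hw
    have hb : M 0 1 ≠ 0 := by
      intro hb; rw [hw, hb] at hdet; simp at hdet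
    apply Subtype.ext
    apply Subtype.ext
    simp only
    ext i j
    fin_cases i <;> fin_cases j <;>
      simp only [Matrix.cons_val', Matrix.cons_val_zero, Matrix.cons_val_one, Matrix.head_cons,
        Matrix.empty_val', Matrix.cons_val_fin_one, Matrix.head_fin_const, Matrix.of_apply]
    · rfl
    · rfl
    · rw [hw] at hdet
      show -(M 0 1)⁻¹ = M 1 0
      field_simp
      linear_combination hdet
    · exact hw.symm
  right_inv := by rintro ⟨a, b, hb⟩; simp [div_self hb]

lemma eps_zero : eps p 0 = 1 := by simp [eps]

lemma units_sum (x : ZMod p) :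
    ∑ a : (ZMod p)ˣ, eps p ((a : ZMod p) * x) = (if x = 0 then (p : ℂ) else 0) - 1 := by
  have h1 : ∑ a : (ZMod p)ˣ, eps p ((a : ZMod p) * x)
      = ∑ b : {b : ZMod p // b ≠ 0}, eps p ((b : ZMod p) * x) :=
    Fintype.sum_equiv unitsEquivNeZero _ _ (fun a => rfl)
  have h2 : ∑ b : {b : ZMod p // b ≠ 0}, eps p ((b : ZMod p) * x)
      = ∑ b ∈ Finset.univ.erase (0 : ZMod p), eps p (b * x) :=
    by
    refine (Finset.sum_subtype _ ?_ fun b => eps p (b * x)).symm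
    intro b; simp
  have h3 : eps p ((0 : ZMod p) * x) + ∑ b ∈ Finset.univ.erase (0 : ZMod p), eps p (b * x)
      = ∑ b : ZMod p, eps p (b * x) :=
    Finset.add_sum_erase _ (fun b => eps p (b * x)) (Finset.mem_univ 0)
  have h4 : ∑ b : ZMod p, eps p (b * x) = if x = 0 then (p : ℂ) else 0 := by
    by_cases hx : x = 0
    · simp [hx, eps_zero, ZMod.card]
    · simp [hx, eps_mul_sum p x hx]
  rw [h1, h2, ← h4, ← h3, zero_mul, eps_zero]
  ring

lemma sum_over_SL (h : ZMod p → ℂ) :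
    ∑ w : SL2 p, h ((w : Matrix (Fin 2) (Fin 2) (ZMod p)) 1 1)
      = ∑ d : ZMod p,
          (Fintype.card {w : SL2 p // (w : Matrix (Fin 2) (Fin 2) (ZMod p)) 1 1 = d} : ℂ) * h d := by
  classical
  have h1 : ∑ w : SL2 p, h ((w : Matrix (Fin 2) (Fin 2) (ZMod p)) 1 1)
      = ∑ x : (Σ d : ZMod p, {w : SL2 p // (w : Matrix (Fin 2) (Fin 2) (ZMod p)) 1 1 = d}),
          h x.1 := by
    refine (Fintype.sum_equiv (Equiv.sigmaFiberEquiv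
      (fun w : SL2 p => (w : Matrix (Fin 2) (Fin 2) (ZMod p)) 1 1)) _ _ ?_).symm
    rintro ⟨d, w, hw⟩
    exact congrArg h hw.symm
  rw [h1, ← Finset.univ_sigma_univ, Finset.sum_sigma]
  refine Finset.sum_congr rfl fun d _ => ?_
  trans ∑ _s : {w : SL2 p // (w : Matrix (Fin 2) (Fin 2) (ZMod p)) 1 1 = d}, h d
  · rfl
  · rw [Finset.sum_const, nsmul_eq_mul, Finset.card_univ]

lemma card_fiber_ne (d : ZMod p) (hd : d ≠ 0) :
    Fintype.card {w : SL2 p // (w : Matrix (Fin 2) (Fin 2) (ZMod p)) 1 1 = d} = p * p := by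
  rw [Fintype.card_congr (fiberEquivNZ p d hd)]
  simp [ZMod.card]

lemma card_fiber_zero :
    Fintype.card {w : SL2 p // (w : Matrix (Fin 2) (Fin 2) (ZMod p)) 1 1 = 0} = p * (p - 1) := by
  rw [Fintype.card_congr (fiberEquivZ p)]
  rw [Fintype.card_prod, ZMod.card]
  congr 1
  rw [Fintype.card_subtype_compl (· = (0 : ZMod p))]
  simp [ZMod.card, Fintype.card_subtype_eq]

lemma card_fiber_complex (d : ZMod p) :
    (Fintype.card {w : SL2 p // (w : Matrix (Fin 2) (Fin 2) (ZMod p)) 1 1 = d} : ℂ)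
      = if d = 0 then (p : ℂ) * ((p : ℂ) - 1) else (p : ℂ) * (p : ℂ) := by
  by_cases hd : d = 0
  · subst hd
    rw [card_fiber_zero, if_pos rfl]
    push_cast [Nat.cast_sub hp.out.one_le]
    ring
  · rw [card_fiber_ne p d hd, if_neg hd]
    push_cast
    ring

lemma card_SL2_complex :
    (Fintype.card (SL2 p) : ℂ) = (p : ℂ) ^ 3 - (p : ℂ) := by
  have h1 : Fintype.card (SL2 p)
      = ∑ d : ZMod p, Fintype.card {w : SL2 p // (w : Matrix (Fin 2) (Fin 2) (ZMod p)) 1 1 = d} := by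
    rw [← Fintype.card_sigma]
    exact Fintype.card_congr (Equiv.sigmaFiberEquiv _).symm
  rw [h1]
  push_cast
  rw [show (∑ d : ZMod p,
      (Fintype.card {w : SL2 p // (w : Matrix (Fin 2) (Fin 2) (ZMod p)) 1 1 = d} : ℂ))
    = ∑ d : ZMod p, (if d = 0 then (p : ℂ) * ((p : ℂ) - 1) else (p : ℂ) * (p : ℂ)) from
    Finset.sum_congr rfl fun d _ => card_fiber_complex p d]
  rw [← Finset.add_sum_erase _ _ (Finset.mem_univ (0 : ZMod p)), if_pos rfl]
  rw [Finset.sum_congr rfl (fun d hd => if_neg (Finset.mem_erase.mp hd).1), Finset.sum_const]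
  rw [Finset.card_erase_of_mem (Finset.mem_univ _), Finset.card_univ, ZMod.card]
  rw [nsmul_eq_mul, Nat.cast_sub hp.out.one_le]
  push_cast
  ring

theorem stmt1 (p : ℕ) [Fact p.Prime] (n : ℤ) (hn : ¬ (p : ℤ) ∣ n) :
    (1 / (Fintype.card (Matrix.SpecialLinearGroup (Fin 2) (ZMod p)) : ℂ)) *
      ∑ w : Matrix.SpecialLinearGroup (Fin 2) (ZMod p), ramanujanSum p (dEntry w - n)
    = 1 / ((p : ℂ) ^ 2 - 1) := by
  have hp : Fact p.Prime := inferInstance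
  set nb : ZMod p := (n : ZMod p) with hnb
  have hnb0 : nb ≠ 0 := by
    rw [hnb, Ne, ZMod.intCast_zmod_eq_zero_iff_dvd]
    exact hn
  -- rewrite each Ramanujan sum via eps
  have hram : ∀ w : Matrix.SpecialLinearGroup (Fin 2) (ZMod p),
      ramanujanSum p (dEntry w - n)
        = (if (w : Matrix (Fin 2) (Fin 2) (ZMod p)) 1 1 - nb = 0 then (p : ℂ) else 0) - 1 := by
    intro w
    rw [← units_sum p ((w : Matrix (Fin 2) (Fin 2) (ZMod p)) 1 1 - nb)]
    unfold ramanujanSum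
    refine Finset.sum_congr rfl fun a _ => ?_
    have h1 : 2 * (Real.pi : ℂ) * Complex.I * (((a : ZMod p).val : ℂ) * ((dEntry w - n : ℤ) : ℂ)) / p
        = 2 * (Real.pi : ℂ) * Complex.I * ((((a : ZMod p).val : ℤ) * (dEntry w - n) : ℤ) : ℂ) / p := by
      push_cast
      ring
    rw [h1, exp_eq_eps]
    congr 1
    push_cast [dEntry]
    simp [ZMod.natCast_val, ZMod.cast_id, hnb]
  rw [Finset.sum_congr rfl fun w _ => hram w]
  rw [sum_over_SL p (fun x => (if x - nb = 0 then (p : ℂ) else 0) - 1)]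
  rw [Finset.sum_congr rfl fun d _ => by rw [card_fiber_complex p d]]
  have hsplit : ∑ d : ZMod p,
      (if d = 0 then (p : ℂ) * ((p : ℂ) - 1) else (p : ℂ) * (p : ℂ)) *
        ((if d - nb = 0 then (p : ℂ) else 0) - 1)
      = (∑ d : ZMod p,
          (if d = 0 then (p : ℂ) * ((p : ℂ) - 1) else (p : ℂ) * (p : ℂ)) *
            (if d - nb = 0 then (p : ℂ) else 0))
        - ∑ d : ZMod p, (if d = 0 then (p : ℂ) * ((p : ℂ) - 1) else (p : ℂ) * (p : ℂ)) := by
    rw [← Finset.sum_sub_distrib]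
    exact Finset.sum_congr rfl fun d _ => by ring
  rw [hsplit]
  have hS1 : ∑ d : ZMod p,
      (if d = 0 then (p : ℂ) * ((p : ℂ) - 1) else (p : ℂ) * (p : ℂ)) *
        (if d - nb = 0 then (p : ℂ) else 0) = (p : ℂ) ^ 3 := by
    rw [Finset.sum_eq_single nb]
    · rw [if_neg hnb0, if_pos (sub_self nb)]; ring
    · intro d _ hd
      rw [if_neg (fun h => hd (sub_eq_zero.mp h)), mul_zero]
    · intro h; exact absurd (Finset.mem_univ nb) h
  have hS2 : ∑ d : ZMod p,
      (if d = 0 then (p : ℂ) * ((p : ℂ) - 1) else (p : ℂ) * (p : ℂ))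
      = (p : ℂ) ^ 3 - (p : ℂ) := by
    have h1 : Fintype.card (SL2 p)
        = ∑ d : ZMod p,
          Fintype.card {w : SL2 p // (w : Matrix (Fin 2) (Fin 2) (ZMod p)) 1 1 = d} := by
      rw [← Fintype.card_sigma]
      exact Fintype.card_congr (Equiv.sigmaFiberEquiv _).symm
    rw [← Finset.sum_congr rfl fun d _ => card_fiber_complex p d, ← Nat.cast_sum, ← h1,
      card_SL2_complex]
  rw [hS1, hS2, card_SL2_complex p]
  have hp0 : (p : ℂ) ≠ 0 := Nat.cast_ne_zero.mpr hp.out.pos.ne'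
  have hp1 : (p : ℂ) ^ 2 - 1 ≠ 0 := by
    have h2 : 2 ≤ p := hp.out.two_le
    have h4 : 4 ≤ p ^ 2 := by nlinarith
    have : ((p ^ 2 - 1 : ℕ) : ℂ) ≠ 0 := by
      rw [Nat.cast_ne_zero]
      omega
    rwa [Nat.cast_sub (by omega), Nat.cast_pow, Nat.cast_one] at this
  have hden : (p : ℂ) ^ 3 - (p : ℂ) ≠ 0 := by
    have h := mul_ne_zero hp0 hp1
    intro h0
    exact h (by linear_combination h0)
  field_simp [hden]
  ring
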